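/- Let H = (V,E,w) be an edge-weighted hypergraph and let f_1, …, f_k be nonzero vectors in ℝ^V that are pairwise orthogonal in the weighted inner product. Then every nonzero h ∈ span{f_1,…,f_k} satisfies D_w(h) ≤ k · max_{i ∈ [k]} D_w(f_i); consequently ζ_k ≤ k · max_{i ∈ [k]} D_w(f_i). Moreover, if the vectors f_1, …, f_k have pairwise disjoint supports, then every nonzero h ∈ span{f_1,…,f_k} satisfies D_w(h) ≤ 2 · max_{i ∈ [k]} D_w(f_i), and hence ζ_k ≤ 2 · max_{i ∈ [k]} D_w(f_i). -/

import Mathlib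

open Finset

/-- An edge-weighted hypergraph on a finite vertex set `V`: a finite set of hyperedges,
each a nonempty subset of `V`, with positive weights. -/
structure WHypergraph (V : Type*) [Fintype V] [DecidableEq V] where
  E : Finset (Finset V)
  w : Finset V → ℝ
  edge_nonempty : ∀ e ∈ E, e.Nonempty
  w_pos : ∀ e ∈ E, 0 < w e

namespace WHypergraph

variable {V : Type*} [Fintype V] [DecidableEq V]

/-- The weight of a vertex: total weight of hyperedges containing it. -/
noncomputable def wv (H : WHypergraph V) (v : V) : ℝ :=
  ∑ e ∈ H.E.filter (fun e => v ∈ e), H.w e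

/-- The weight of a set of vertices. -/
noncomputable def wS (H : WHypergraph V) (S : Finset V) : ℝ := ∑ v ∈ S, H.wv v

/-- The boundary of `S`: hyperedges meeting both `S` and its complement. -/
noncomputable def bdry (H : WHypergraph V) (S : Finset V) : Finset (Finset V) :=
  H.E.filter (fun e => (e ∩ S).Nonempty ∧ (e \ S).Nonempty)

/-- The expansion `φ(S)` of a set of vertices. -/
noncomputable def phi (H : WHypergraph V) (S : Finset V) : ℝ :=
  (∑ e ∈ H.bdry S, H.w e) / H.wS S

/-- `max_{u,v ∈ e} (f u - f v)^2`. -/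
noncomputable def edgeDisc (H : WHypergraph V) (f : V → ℝ) (e : Finset V) : ℝ :=
  sSup {x : ℝ | ∃ u ∈ e, ∃ v ∈ e, (f u - f v) ^ 2 = x}

/-- The discrepancy ratio `D_w(f)`. -/
noncomputable def disc (H : WHypergraph V) (f : V → ℝ) : ℝ :=
  (∑ e ∈ H.E, H.w e * H.edgeDisc f e) / ∑ u : V, H.wv u * f u ^ 2

/-- The weighted inner product `⟨f,g⟩_w`. -/
noncomputable def wip (H : WHypergraph V) (f g : V → ℝ) : ℝ :=
  ∑ u : V, H.wv u * f u * g u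

/-- `γ₂`: infimum of the discrepancy ratio over nonzero `f ⊥_w 1`. -/
noncomputable def gamma2 (H : WHypergraph V) : ℝ :=
  sInf {x : ℝ | ∃ f : V → ℝ, f ≠ 0 ∧ H.wip f (fun _ => 1) = 0 ∧ H.disc f = x}

/-- The hypergraph expansion `φ_H`. -/
noncomputable def phiH (H : WHypergraph V) : ℝ :=
  sInf {x : ℝ | ∃ S : Finset V, S.Nonempty ∧ S ≠ univ ∧
    x = max (H.phi S) (H.phi Sᶜ)}

/-- `ζ_k`: inf over `k`-tuples of nonzero pairwise `w`-orthogonal vectors of the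
sup of the discrepancy ratio over nonzero vectors in their span. -/
noncomputable def zeta (H : WHypergraph V) (k : ℕ) : ℝ :=
  sInf {x : ℝ | ∃ f : Fin k → V → ℝ, (∀ i, f i ≠ 0) ∧
    (∀ i j, i ≠ j → H.wip (f i) (f j) = 0) ∧
    x = sSup {y : ℝ | ∃ h : V → ℝ, h ≠ 0 ∧
      h ∈ Submodule.span ℝ (Set.range f) ∧ H.disc h = y}}

/-- `ξ_k`: inf over `k`-tuples of nonzero pairwise `w`-orthogonal vectors of the
maximum discrepancy ratio among them. -/
noncomputable def xi (H : WHypergraph V) (k : ℕ) : ℝ :=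
  sInf {x : ℝ | ∃ f : Fin k → V → ℝ, (∀ i, f i ≠ 0) ∧
    (∀ i j, i ≠ j → H.wip (f i) (f j) = 0) ∧
    x = sSup {y : ℝ | ∃ i, H.disc (f i) = y}}

/-- A sequence of procedural minimizers: `f 0` is a nonzero constant vector, each `f i`
is nonzero and `w`-orthogonal to the previous ones, and attains the infimum of the
discrepancy ratio over nonzero vectors `w`-orthogonal to the previous ones. -/
def IsProcMin (H : WHypergraph V) {k : ℕ} (f : Fin k → V → ℝ) : Prop :=
  (∀ i, f i ≠ 0) ∧
  (∀ i : Fin k, (i : ℕ) = 0 → ∃ c : ℝ, f i = fun _ => c) ∧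
  (∀ i j : Fin k, (j : ℕ) < (i : ℕ) → H.wip (f i) (f j) = 0) ∧
  (∀ i : Fin k, 0 < (i : ℕ) → H.disc (f i) =
    sInf {x : ℝ | ∃ g : V → ℝ, g ≠ 0 ∧
      (∀ j : Fin k, (j : ℕ) < (i : ℕ) → H.wip g (f j) = 0) ∧ H.disc g = x})

end WHypergraph

section Aux

variable {V : Type*} [Fintype V] [DecidableEq V]

lemma myEdgeDisc_bddAbove (f : V → ℝ) (e : Finset V) :
    BddAbove {x : ℝ | ∃ u ∈ e, ∃ v ∈ e, (f u - f v) ^ 2 = x} := by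
  apply Set.Finite.bddAbove
  apply Set.Finite.subset (Set.finite_range (fun p : V × V => (f p.1 - f p.2) ^ 2))
  rintro x ⟨u, -, v, -, rfl⟩
  exact ⟨(u, v), rfl⟩

lemma my_le_edgeDisc (H : WHypergraph V) (f : V → ℝ) {e : Finset V} {u v : V}
    (hu : u ∈ e) (hv : v ∈ e) : (f u - f v) ^ 2 ≤ H.edgeDisc f e :=
  le_csSup (myEdgeDisc_bddAbove f e) ⟨u, hu, v, hv, rfl⟩

lemma myEdgeDisc_nonneg (H : WHypergraph V) (f : V → ℝ) {e : Finset V}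
    (he : e.Nonempty) : 0 ≤ H.edgeDisc f e := by
  obtain ⟨u, hu⟩ := he
  have := my_le_edgeDisc H f hu hu
  simpa using this

lemma myEdgeDisc_le (H : WHypergraph V) (f : V → ℝ) {e : Finset V} {B : ℝ}
    (hB : 0 ≤ B) (hb : ∀ u ∈ e, ∀ v ∈ e, (f u - f v) ^ 2 ≤ B) :
    H.edgeDisc f e ≤ B :=
  Real.sSup_le (by rintro x ⟨u, hu, v, hv, rfl⟩; exact hb u hu v hv) hB

lemma myDen_pos (H : WHypergraph V) (hw : ∀ v : V, 0 < H.wv v) {h : V → ℝ}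
    (hh : h ≠ 0) : 0 < ∑ u : V, H.wv u * h u ^ 2 := by
  obtain ⟨u, hu⟩ := Function.ne_iff.mp hh
  apply Finset.sum_pos' (fun v _ => mul_nonneg (hw v).le (sq_nonneg _))
  refine ⟨u, Finset.mem_univ u, mul_pos (hw u) ?_⟩
  have : h u ≠ 0 := hu
  exact lt_of_le_of_ne (sq_nonneg _) (Ne.symm (pow_ne_zero 2 this))

lemma myNum_nonneg (H : WHypergraph V) (f : V → ℝ) :
    0 ≤ ∑ e ∈ H.E, H.w e * H.edgeDisc f e :=
  Finset.sum_nonneg fun e he =>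
    mul_nonneg (H.w_pos e he).le (myEdgeDisc_nonneg H f (H.edge_nonempty e he))

lemma myDisc_nonneg (H : WHypergraph V) (hw : ∀ v : V, 0 < H.wv v) {h : V → ℝ}
    (hh : h ≠ 0) : 0 ≤ H.disc h := by
  rw [WHypergraph.disc]
  exact div_nonneg (myNum_nonneg H h) (myDen_pos H hw hh).le

lemma myCore (H : WHypergraph V) (hw : ∀ v : V, 0 < H.wv v) {k : ℕ}
    (f : Fin k → V → ℝ) (hf0 : ∀ i, f i ≠ 0)
    (horth : ∀ i j, i ≠ j → H.wip (f i) (f j) = 0)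
    {ξ C : ℝ} (hC : 0 ≤ C)
    (hξi : ∀ i, H.disc (f i) ≤ ξ)
    (a : Fin k → ℝ)
    (hkey : ∀ u v : V, (∑ i, a i * (f i u - f i v)) ^ 2 ≤
      C * ∑ i, (a i * (f i u - f i v)) ^ 2)
    (h : V → ℝ) (hh : h ≠ 0) (hha : ∀ u, h u = ∑ i, a i * f i u) :
    H.disc h ≤ C * ξ := by
  have hdenpos : 0 < ∑ u : V, H.wv u * h u ^ 2 := myDen_pos H hw hh
  have hdenfi : ∀ i, 0 < ∑ u : V, H.wv u * f i u ^ 2 := fun i => myDen_pos H hw (hf0 i)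
  have hnumfi : ∀ i, ∑ e ∈ H.E, H.w e * H.edgeDisc (f i) e ≤
      ξ * ∑ u : V, H.wv u * f i u ^ 2 := by
    intro i
    have := hξi i
    rw [WHypergraph.disc, div_le_iff₀ (hdenfi i)] at this
    exact this
  have hden : ∑ u : V, H.wv u * h u ^ 2 =
      ∑ i, a i ^ 2 * ∑ u : V, H.wv u * f i u ^ 2 := by
    calc ∑ u : V, H.wv u * h u ^ 2
        = ∑ u : V, ∑ i, ∑ j, a i * a j * (H.wv u * f i u * f j u) := by
          refine Finset.sum_congr rfl fun u _ => ?_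
          rw [hha u, sq, Finset.sum_mul_sum, Finset.mul_sum]
          refine Finset.sum_congr rfl fun i _ => ?_
          rw [Finset.mul_sum]
          exact Finset.sum_congr rfl fun j _ => by ring
      _ = ∑ i, ∑ j, a i * a j * H.wip (f i) (f j) := by
          rw [Finset.sum_comm]
          refine Finset.sum_congr rfl fun i _ => ?_
          rw [Finset.sum_comm]
          refine Finset.sum_congr rfl fun j _ => ?_
          rw [WHypergraph.wip, Finset.mul_sum]
      _ = ∑ i, a i ^ 2 * ∑ u : V, H.wv u * f i u ^ 2 := by
          refine Finset.sum_congr rfl fun i _ => ?_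
          rw [Finset.sum_eq_single i (fun j _ hj => by rw [horth i j (Ne.symm hj), mul_zero])
            (fun hi => absurd (Finset.mem_univ i) hi)]
          rw [WHypergraph.wip, Finset.mul_sum, Finset.mul_sum]
          exact Finset.sum_congr rfl fun u _ => by ring
  have hedge : ∀ e ∈ H.E, H.edgeDisc h e ≤ C * ∑ i, a i ^ 2 * H.edgeDisc (f i) e := by
    intro e he
    have hnn : 0 ≤ C * ∑ i, a i ^ 2 * H.edgeDisc (f i) e :=
      mul_nonneg hC (Finset.sum_nonneg fun i _ =>
        mul_nonneg (sq_nonneg _) (myEdgeDisc_nonneg H (f i) (H.edge_nonempty e he)))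
    refine myEdgeDisc_le H h hnn ?_
    intro u hu v hv
    have hdiff : h u - h v = ∑ i, a i * (f i u - f i v) := by
      rw [hha u, hha v, ← Finset.sum_sub_distrib]
      exact Finset.sum_congr rfl fun i _ => by ring
    rw [hdiff]
    refine (hkey u v).trans (mul_le_mul_of_nonneg_left
      (Finset.sum_le_sum fun i _ => ?_) hC)
    calc (a i * (f i u - f i v)) ^ 2 = a i ^ 2 * (f i u - f i v) ^ 2 := by ring
      _ ≤ a i ^ 2 * H.edgeDisc (f i) e :=
          mul_le_mul_of_nonneg_left (my_le_edgeDisc H (f i) hu hv) (sq_nonneg _)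
  have hnum : ∑ e ∈ H.E, H.w e * H.edgeDisc h e ≤
      C * ξ * ∑ u : V, H.wv u * h u ^ 2 := by
    calc ∑ e ∈ H.E, H.w e * H.edgeDisc h e
        ≤ ∑ e ∈ H.E, H.w e * (C * ∑ i, a i ^ 2 * H.edgeDisc (f i) e) :=
          Finset.sum_le_sum fun e he =>
            mul_le_mul_of_nonneg_left (hedge e he) (H.w_pos e he).le
      _ = ∑ i, ∑ e ∈ H.E, C * (a i ^ 2 * (H.w e * H.edgeDisc (f i) e)) := by
          rw [Finset.sum_comm]
          simp only [Finset.mul_sum]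
          exact Finset.sum_congr rfl fun e _ => Finset.sum_congr rfl fun i _ => by ring
      _ = C * ∑ i, a i ^ 2 * ∑ e ∈ H.E, H.w e * H.edgeDisc (f i) e := by
          simp only [Finset.mul_sum]
      _ ≤ C * ∑ i, a i ^ 2 * (ξ * ∑ u : V, H.wv u * f i u ^ 2) :=
          mul_le_mul_of_nonneg_left (Finset.sum_le_sum fun i _ =>
            mul_le_mul_of_nonneg_left (hnumfi i) (sq_nonneg _)) hC
      _ = C * ξ * ∑ i, a i ^ 2 * ∑ u : V, H.wv u * f i u ^ 2 := by
          simp only [Finset.mul_sum]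
          exact Finset.sum_congr rfl fun i _ => Finset.sum_congr rfl fun u _ => by ring
      _ = C * ξ * ∑ u : V, H.wv u * h u ^ 2 := by rw [hden]
  rw [WHypergraph.disc, div_le_iff₀ hdenpos]
  exact hnum

lemma myZeta_le (H : WHypergraph V) (hw : ∀ v : V, 0 < H.wv v) {k : ℕ}
    (f : Fin k → V → ℝ) (hf0 : ∀ i, f i ≠ 0)
    (horth : ∀ i j, i ≠ j → H.wip (f i) (f j) = 0)
    {B : ℝ} (hB : 0 ≤ B)
    (hspan : ∀ h : V → ℝ, h ≠ 0 → h ∈ Submodule.span ℝ (Set.range f) →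
      H.disc h ≤ B) :
    H.zeta k ≤ B := by
  rw [WHypergraph.zeta]
  have hmem : sSup {y : ℝ | ∃ h : V → ℝ, h ≠ 0 ∧
      h ∈ Submodule.span ℝ (Set.range f) ∧ H.disc h = y} ∈
      {x : ℝ | ∃ g : Fin k → V → ℝ, (∀ i, g i ≠ 0) ∧
        (∀ i j, i ≠ j → H.wip (g i) (g j) = 0) ∧
        x = sSup {y : ℝ | ∃ h : V → ℝ, h ≠ 0 ∧
          h ∈ Submodule.span ℝ (Set.range g) ∧ H.disc h = y}} :=
    ⟨f, hf0, horth, rfl⟩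
  refine le_trans (csInf_le ?_ hmem) ?_
  · refine ⟨0, fun x hx => ?_⟩
    obtain ⟨g, hg0, hgorth, rfl⟩ := hx
    apply Real.sSup_nonneg
    rintro y ⟨h, hh, -, rfl⟩
    exact myDisc_nonneg H hw hh
  · refine Real.sSup_le ?_ hB
    rintro y ⟨h, hh, hmem', rfl⟩
    exact hspan h hh hmem'

end Aux

/-- Span bound: for nonzero pairwise `w`-orthogonal `f_1, …, f_k`, every nonzero `h` in
their span satisfies `D_w(h) ≤ k · max_i D_w(f_i)` (hence `ζ_k ≤ k · max_i D_w(f_i)`);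
if moreover the supports are pairwise disjoint, `D_w(h) ≤ 2 · max_i D_w(f_i)`
(hence `ζ_k ≤ 2 · max_i D_w(f_i)`). -/
theorem disc_span_bound {V : Type*} [Fintype V] [DecidableEq V]
    (H : WHypergraph V) (hw : ∀ v : V, 0 < H.wv v)
    (k : ℕ) (hk : 0 < k) (f : Fin k → V → ℝ)
    (hf0 : ∀ i, f i ≠ 0)
    (horth : ∀ i j, i ≠ j → H.wip (f i) (f j) = 0)
    (ξ : ℝ)
    (hξ : ξ = Finset.univ.sup' (Finset.univ_nonempty_iff.mpr ⟨⟨0, hk⟩⟩)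
      (fun i => H.disc (f i))) :
    ((∀ h : V → ℝ, h ≠ 0 → h ∈ Submodule.span ℝ (Set.range f) →
        H.disc h ≤ k * ξ) ∧
      H.zeta k ≤ k * ξ) ∧
    ((∀ i j, i ≠ j → ∀ u : V, f i u = 0 ∨ f j u = 0) →
      (∀ h : V → ℝ, h ≠ 0 → h ∈ Submodule.span ℝ (Set.range f) →
        H.disc h ≤ 2 * ξ) ∧
      H.zeta k ≤ 2 * ξ) := by
  have hrep : ∀ h : V → ℝ, h ∈ Submodule.span ℝ (Set.range f) →
      ∃ a : Fin k → ℝ, ∀ u, h u = ∑ i, a i * f i u := by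
    intro h hmemh
    obtain ⟨a, ha⟩ := (Submodule.mem_span_range_iff_exists_fun ℝ).mp hmemh
    refine ⟨a, fun u => ?_⟩
    rw [← ha]
    simp [Finset.sum_apply]
  have hξi : ∀ i, H.disc (f i) ≤ ξ := fun i =>
    hξ ▸ Finset.le_sup' (fun i => H.disc (f i)) (Finset.mem_univ i)
  have hξ0 : 0 ≤ ξ :=
    le_trans (myDisc_nonneg H hw (hf0 ⟨0, hk⟩)) (hξi ⟨0, hk⟩)
  have hgen : ∀ h : V → ℝ, h ≠ 0 → h ∈ Submodule.span ℝ (Set.range f) →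
      H.disc h ≤ k * ξ := by
    intro h hh hmemh
    obtain ⟨a, ha⟩ := hrep h hmemh
    refine myCore H hw f hf0 horth (Nat.cast_nonneg k) hξi a ?_ h hh ha
    intro u v
    have := sq_sum_le_card_mul_sum_sq (s := Finset.univ)
      (f := fun i => a i * (f i u - f i v))
    simpa using this
  have h2 : (∀ i j, i ≠ j → ∀ u : V, f i u = 0 ∨ f j u = 0) →
      ∀ h : V → ℝ, h ≠ 0 → h ∈ Submodule.span ℝ (Set.range f) →
      H.disc h ≤ 2 * ξ := by
    intro hdisj h hh hmemh
    obtain ⟨a, ha⟩ := hrep h hmemh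
    refine myCore H hw f hf0 horth (by norm_num) hξi a ?_ h hh ha
    intro u v
    set t : Fin k → ℝ := fun i => a i * (f i u - f i v) with ht
    set s := Finset.univ.filter (fun i => t i ≠ 0) with hs
    have hsum : ∑ i, t i = ∑ i ∈ s, t i := (Finset.sum_filter_ne_zero Finset.univ).symm
    have hone : ∀ x : V, (Finset.univ.filter (fun i => f i x ≠ 0)).card ≤ 1 := by
      intro x
      refine Finset.card_le_one.mpr fun i hi j hj => ?_
      simp only [Finset.mem_filter, Finset.mem_univ, true_and] at hi hj
      by_contra hne
      rcases hdisj i j hne x with h0 | h0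
      · exact hi h0
      · exact hj h0
    have hcard : s.card ≤ 2 := by
      have hsub : s ⊆ Finset.univ.filter (fun i => f i u ≠ 0) ∪
          Finset.univ.filter (fun i => f i v ≠ 0) := by
        intro i hi
        simp only [hs, Finset.mem_filter, Finset.mem_univ, true_and] at hi
        by_contra hcon
        simp only [Finset.mem_union, Finset.mem_filter, Finset.mem_univ, true_and,
          not_or, not_not] at hcon
        exact hi (by simp [ht, hcon.1, hcon.2])
      calc s.card ≤ _ := Finset.card_le_card hsub
        _ ≤ _ := Finset.card_union_le _ _
        _ ≤ 1 + 1 := add_le_add (hone u) (hone v)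
        _ = 2 := by norm_num
    calc (∑ i, t i) ^ 2 = (∑ i ∈ s, t i) ^ 2 := by rw [hsum]
      _ ≤ s.card * ∑ i ∈ s, t i ^ 2 := sq_sum_le_card_mul_sum_sq
      _ ≤ 2 * ∑ i ∈ s, t i ^ 2 := by
          refine mul_le_mul_of_nonneg_right ?_
            (Finset.sum_nonneg fun i _ => sq_nonneg _)
          exact_mod_cast hcard
      _ ≤ 2 * ∑ i, t i ^ 2 := by
          refine mul_le_mul_of_nonneg_left
            (Finset.sum_le_sum_of_subset_of_nonneg (Finset.filter_subset _ _)
              (fun i _ _ => sq_nonneg _)) (by norm_num)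
  refine ⟨⟨hgen, myZeta_le H hw f hf0 horth
      (mul_nonneg (Nat.cast_nonneg k) hξ0) hgen⟩, fun hdisj => ?_⟩
  exact ⟨h2 hdisj, myZeta_le H hw f hf0 horth
    (mul_nonneg (by norm_num) hξ0) (h2 hdisj)⟩
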